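/- Let a = s_{i_1}⋯s_{i_r} be a reduced word for w ∈ S_n and P_x(a) = Σ_{σ: π(w^σ)=x} q^{|D(σ)|} the defect generating polynomial. Then Σ_{x ≤ w} q^{ℓ(x)} P_x(a) = (1+q)^{ℓ(w)}, where the sum is over all x below w in Bruhat order. Equivalently (since every mask produces some x ≤ w), Σ_{σ ∈ {0,1}^r} q^{ℓ(π(w^σ)) + |D(σ)|} = (1+q)^r. -/

import Mathlib

open Polynomial

/-- The simple transposition `s_i = (i, i+1)` (1-based) in `S_n`, acting on `Fin n`
(0-based positions `i-1` and `i`); equals `1` if `i` is out of range. -/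
def gen (n : ℕ) (i : ℕ) : Equiv.Perm (Fin n) :=
  if h : 1 ≤ i ∧ i < n then Equiv.swap ⟨i - 1, by omega⟩ ⟨i, h.2⟩ else 1

/-- Product of the word `l` of generator indices. -/
def wordProd (n : ℕ) (l : List ℕ) : Equiv.Perm (Fin n) :=
  (l.map (gen n)).prod

/-- Coxeter length of `w ∈ S_n`. -/
noncomputable def len (n : ℕ) (w : Equiv.Perm (Fin n)) : ℕ :=
  sInf {r | ∃ l : List ℕ, (∀ i ∈ l, 1 ≤ i ∧ i < n) ∧ wordProd n l = w ∧ l.length = r}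

/-- `l` is a reduced word for `w`. -/
def IsReducedWord (n : ℕ) (w : Equiv.Perm (Fin n)) (l : List ℕ) : Prop :=
  (∀ i ∈ l, 1 ≤ i ∧ i < n) ∧ wordProd n l = w ∧ l.length = len n w

/-- Bruhat-Chevalley order: `x ≤ w` iff every reduced word for `w` contains a
subword whose product is `x`. -/
def Bruhat (n : ℕ) (x w : Equiv.Perm (Fin n)) : Prop :=
  ∀ l, IsReducedWord n w l → ∃ t, t.Sublist l ∧ wordProd n t = x

/-- `w` is 321-avoiding: no `i < j < k` with `w i > w j > w k`. -/
def Avoids321 (n : ℕ) (w : Equiv.Perm (Fin n)) : Prop :=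
  ¬ ∃ i j k : Fin n, i < j ∧ j < k ∧ w j < w i ∧ w k < w j

/-- Product of the subword of `l` selected by the mask `S` (set of selected positions). -/
def maskProd (n : ℕ) (l : List ℕ) (S : Finset ℕ) : Equiv.Perm (Fin n) :=
  wordProd n (((List.range l.length).filter (fun j => decide (j ∈ S))).map (fun j => l.getD j 0))

/-- Position `j` of the word `l` is a defect of the mask `S`. -/
noncomputable def IsDefect (n : ℕ) (l : List ℕ) (S : Finset ℕ) (j : ℕ) : Prop :=
  len n (maskProd n (l.take j) S * gen n (l.getD j 0)) < len n (maskProd n (l.take j) S)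

/-- The defect set `D(σ)` of the mask `S` on the word `l`. -/
noncomputable def defectSet (n : ℕ) (l : List ℕ) (S : Finset ℕ) : Finset ℕ :=
  (Finset.range l.length).filter (fun j =>
    len n (maskProd n (l.take j) S * gen n (l.getD j 0)) < len n (maskProd n (l.take j) S))

/-- Deodhar's defect generating polynomial `P_x(a) = Σ_{σ : π(w^σ) = x} q^{|D(σ)|}`. -/
noncomputable def defPoly (n : ℕ) (l : List ℕ) (x : Equiv.Perm (Fin n)) : Polynomial ℤ :=
  ∑ S ∈ (Finset.range l.length).powerset,
    if maskProd n l S = x then (X : Polynomial ℤ) ^ (defectSet n l S).card else 0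

namespace Stmt7

variable {n : ℕ}

theorem _root_.Equiv.Perm.apply_inv_self {α : Type*} (f : Equiv.Perm α) (x : α) :
    f (f⁻¹ x) = x := f.apply_symm_apply x

theorem _root_.Equiv.Perm.inv_apply_self {α : Type*} (f : Equiv.Perm α) (x : α) :
    f⁻¹ (f x) = x := f.symm_apply_apply x

/-- valid word -/
def Valid (n : ℕ) (l : List ℕ) : Prop := ∀ i ∈ l, 1 ≤ i ∧ i < n

theorem wordProd_nil : wordProd n [] = 1 := rfl

theorem wordProd_cons (c : ℕ) (l : List ℕ) :
    wordProd n (c :: l) = gen n c * wordProd n l := by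
  simp [wordProd]

theorem wordProd_append (l₁ l₂ : List ℕ) :
    wordProd n (l₁ ++ l₂) = wordProd n l₁ * wordProd n l₂ := by
  simp [wordProd]

theorem wordProd_singleton (c : ℕ) : wordProd n [c] = gen n c := by
  simp [wordProd]

theorem gen_eq_swap {i : ℕ} (h1 : 1 ≤ i) (h2 : i < n) :
    gen n i = Equiv.swap ⟨i - 1, by omega⟩ ⟨i, h2⟩ := by
  rw [gen, dif_pos ⟨h1, h2⟩]

theorem gen_mul_self (i : ℕ) : gen n i * gen n i = 1 := by
  by_cases h : 1 ≤ i ∧ i < n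
  · rw [gen, dif_pos h, Equiv.swap_mul_self]
  · rw [gen, dif_neg h, one_mul]

theorem gen_inv (i : ℕ) : (gen n i)⁻¹ = gen n i := by
  rw [inv_eq_iff_mul_eq_one, gen_mul_self]

/-! ### Inversions -/

def invSet (w : Equiv.Perm (Fin n)) : Finset (Fin n × Fin n) :=
  Finset.univ.filter (fun p => p.1 < p.2 ∧ w p.2 < w p.1)

def inv' (w : Equiv.Perm (Fin n)) : ℕ := (invSet w).card

theorem inv_one : inv' (1 : Equiv.Perm (Fin n)) = 0 := by
  simp only [inv', invSet, Equiv.Perm.one_apply]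
  apply Finset.card_eq_zero.2; apply Finset.filter_eq_empty_iff.2
  rintro ⟨a, b⟩ -
  simp only [not_and]
  intro h1 h2
  exact absurd h2 (not_lt.2 h1.le)

theorem eq_one_of_strictMono (w : Equiv.Perm (Fin n)) (h : StrictMono (w : Fin n → Fin n)) :
    w = 1 := by
  have hinv : StrictMono (w⁻¹ : Equiv.Perm (Fin n)) := by
    intro a b hab
    rcases lt_trichotomy (w⁻¹ a) (w⁻¹ b) with h' | h' | h'
    · exact h'
    · exact absurd (w.apply_inv_self a ▸ w.apply_inv_self b ▸ congrArg w h') hab.ne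
    · have := h h'
      rw [w.apply_inv_self, w.apply_inv_self] at this
      exact absurd hab (not_lt.2 this.le)
  ext i : 1
  have h1 : i ≤ w i := @StrictMono.le_apply (Fin n) _ (inferInstanceAs (WellFoundedLT (Fin n))) _ h i
  have h2 : w i ≤ w⁻¹ (w i) := @StrictMono.le_apply (Fin n) _ (inferInstanceAs (WellFoundedLT (Fin n))) _ hinv (w i)
  rw [w.inv_apply_self] at h2
  exact le_antisymm h2 h1

theorem strictMono_of_inv_eq_zero {w : Equiv.Perm (Fin n)} (h : inv' w = 0) :
    StrictMono (w : Fin n → Fin n) := by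
  intro a b hab
  by_contra hc
  have hne : w a ≠ w b := fun he => hab.ne (w.injective he)
  have : w b < w a := lt_of_le_of_ne (not_lt.1 hc) (Ne.symm hne)
  have : (a, b) ∈ invSet w := by simp [invSet, hab, this]
  rw [inv', Finset.card_eq_zero] at h
  simp [h] at this

theorem swap_adj_mono {p q : Fin n} (hq : (q : ℕ) = (p : ℕ) + 1) {a b : Fin n}
    (hab : a < b) (hne : ¬(a = p ∧ b = q)) : Equiv.swap p q a < Equiv.swap p q b := by
  have key : ∀ x : Fin n, ((Equiv.swap p q x : Fin n) : ℕ)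
      = if (x : ℕ) = (p : ℕ) then (q : ℕ) else if (x : ℕ) = (q : ℕ) then (p : ℕ) else (x : ℕ) := by
    intro x
    rcases eq_or_ne x p with rfl | hxp
    · rw [Equiv.swap_apply_left, if_pos rfl]
    · rcases eq_or_ne x q with rfl | hxq
      · rw [Equiv.swap_apply_right, if_neg (by omega), if_pos rfl]
      · rw [Equiv.swap_apply_of_ne_of_ne hxp hxq,
          if_neg (fun h => hxp (Fin.ext h)), if_neg (fun h => hxq (Fin.ext h))]
  have hne' : ¬((a : ℕ) = (p : ℕ) ∧ (b : ℕ) = (q : ℕ)) := by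
    rintro ⟨ha, hb⟩; exact hne ⟨Fin.ext ha, Fin.ext hb⟩
  have hab' : (a : ℕ) < (b : ℕ) := hab
  have hbn : (b : ℕ) < n := b.isLt
  rw [Fin.lt_def, key a, key b]
  split_ifs <;> omega

theorem invSet_mul_gen_ascent {i : ℕ} (h1 : 1 ≤ i) (h2 : i < n) {w : Equiv.Perm (Fin n)}
    (hw : w ⟨i - 1, by omega⟩ < w ⟨i, h2⟩) :
    invSet (w * gen n i)
      = insert (⟨i - 1, by omega⟩, ⟨i, h2⟩)
          ((invSet w).image (fun x => (Equiv.swap ⟨i - 1, by omega⟩ ⟨i, h2⟩ x.1,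
            Equiv.swap ⟨i - 1, by omega⟩ ⟨i, h2⟩ x.2))) := by
  set p : Fin n := ⟨i - 1, by omega⟩ with hp
  set q : Fin n := ⟨i, h2⟩ with hqdef
  have hq : (q : ℕ) = (p : ℕ) + 1 := by simp [hp, hqdef]; omega
  have hpq : p < q := by rw [Fin.lt_def]; omega
  set e := Equiv.swap p q with he
  have hgen : gen n i = e := gen_eq_swap h1 h2
  have hee : ∀ x : Fin n, e (e x) = x := fun x => Equiv.swap_apply_self p q x
  ext ⟨a, b⟩
  simp only [invSet, Finset.mem_filter, Finset.mem_univ, true_and, Finset.mem_insert,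
    Finset.mem_image, hgen, Equiv.Perm.mul_apply, Prod.mk.injEq, Prod.exists]
  constructor
  · rintro ⟨hab, hlt⟩
    by_cases hc : a = p ∧ b = q
    · exact Or.inl hc
    · refine Or.inr ⟨e a, e b, ⟨swap_adj_mono hq hab hc, ?_⟩, by rw [hee], by rw [hee]⟩
      exact hlt
  · rintro (⟨ha, hb⟩ | ⟨c, d, ⟨hcd, hwcd⟩, hc, hd⟩)
    · subst ha; subst hb
      refine ⟨hpq, ?_⟩
      rw [Equiv.swap_apply_left, Equiv.swap_apply_right]
      exact hw
    · subst hc; subst hd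
      have hne : ¬(c = p ∧ d = q) := by
        rintro ⟨rfl, rfl⟩
        exact absurd hwcd (not_lt.2 hw.le)
      refine ⟨swap_adj_mono hq hcd hne, ?_⟩
      rwa [hee, hee]

theorem inv_mul_gen_ascent {i : ℕ} (h1 : 1 ≤ i) (h2 : i < n) {w : Equiv.Perm (Fin n)}
    (hw : w ⟨i - 1, by omega⟩ < w ⟨i, h2⟩) :
    inv' (w * gen n i) = inv' w + 1 := by
  set p : Fin n := ⟨i - 1, by omega⟩ with hp
  set q : Fin n := ⟨i, h2⟩ with hqdef
  set e := Equiv.swap p q with he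
  have hinj : Function.Injective (fun x : Fin n × Fin n => (e x.1, e x.2)) := by
    rintro ⟨a, b⟩ ⟨c, d⟩ hx
    simp only [Prod.mk.injEq] at hx
    exact Prod.ext (e.injective hx.1) (e.injective hx.2)
  have hnm : (p, q) ∉ (invSet w).image (fun x => (e x.1, e x.2)) := by
    simp only [Finset.mem_image, Prod.exists, Prod.mk.injEq, not_exists, not_and]
    rintro a b hmem ha hb
    have ha' : a = q := by
      have := congrArg e ha
      rwa [Equiv.swap_apply_self, Equiv.swap_apply_left] at this
    have hb' : b = p := by
      have := congrArg e hb
      rwa [Equiv.swap_apply_self, Equiv.swap_apply_right] at this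
    subst ha'; subst hb'
    simp only [invSet, Finset.mem_filter] at hmem
    have hpq : p < q := by simp [hp, hqdef, Fin.lt_def]; omega
    exact absurd (hmem.2.1.trans hpq) (lt_irrefl _)
  rw [inv', invSet_mul_gen_ascent h1 h2 hw, Finset.card_insert_of_notMem hnm,
    Finset.card_image_of_injective _ hinj, inv']

theorem inv_mul_gen_descent {i : ℕ} (h1 : 1 ≤ i) (h2 : i < n) {w : Equiv.Perm (Fin n)}
    (hw : w ⟨i, h2⟩ < w ⟨i - 1, by omega⟩) :
    inv' (w * gen n i) + 1 = inv' w := by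
  have hgen : gen n i = Equiv.swap ⟨i - 1, by omega⟩ ⟨i, h2⟩ := gen_eq_swap h1 h2
  have hw' : (w * gen n i) ⟨i - 1, by omega⟩ < (w * gen n i) ⟨i, h2⟩ := by
    rw [Equiv.Perm.mul_apply, Equiv.Perm.mul_apply, hgen, Equiv.swap_apply_left,
      Equiv.swap_apply_right]
    exact hw
  have key := inv_mul_gen_ascent h1 h2 hw'
  rw [mul_assoc, gen_mul_self, mul_one] at key
  omega

theorem apply_adj_ne {i : ℕ} (h1 : 1 ≤ i) (h2 : i < n) (w : Equiv.Perm (Fin n)) :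
    w ⟨i - 1, by omega⟩ ≠ w ⟨i, h2⟩ := by
  intro h
  have := w.injective h
  simp [Fin.ext_iff] at this
  omega

theorem inv_mul_gen_cases {i : ℕ} (hv : 1 ≤ i ∧ i < n) (w : Equiv.Perm (Fin n)) :
    inv' (w * gen n i) = inv' w + 1 ∨ inv' (w * gen n i) + 1 = inv' w := by
  rcases lt_or_gt_of_ne (apply_adj_ne hv.1 hv.2 w) with h | h
  · exact Or.inl (inv_mul_gen_ascent hv.1 hv.2 h)
  · exact Or.inr (inv_mul_gen_descent hv.1 hv.2 h)

theorem inv_inv_eq (w : Equiv.Perm (Fin n)) : inv' w⁻¹ = inv' w := by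
  have key : invSet w⁻¹ = (invSet w).image (fun x : Fin n × Fin n => (w x.2, w x.1)) := by
    ext ⟨a, b⟩
    simp only [invSet, Finset.mem_filter, Finset.mem_univ, true_and, Finset.mem_image,
      Prod.exists, Prod.mk.injEq]
    constructor
    · rintro ⟨hab, hlt⟩
      exact ⟨w⁻¹ b, w⁻¹ a, ⟨hlt, by rwa [w.apply_inv_self, w.apply_inv_self]⟩,
        w.apply_inv_self a, w.apply_inv_self b⟩
    · rintro ⟨c, d, ⟨hcd, hwcd⟩, hc, hd⟩
      subst hc; subst hd
      rw [w.inv_apply_self, w.inv_apply_self]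
      exact ⟨hwcd, hcd⟩
  have hinj : Function.Injective (fun x : Fin n × Fin n => (w x.2, w x.1)) := by
    rintro ⟨a, b⟩ ⟨c, d⟩ hx
    simp only [Prod.mk.injEq] at hx
    exact Prod.ext (w.injective hx.2) (w.injective hx.1)
  rw [inv', key, Finset.card_image_of_injective _ hinj, inv']

/-! ### len = inv' -/

theorem inv_mul_wordProd_le (l : List ℕ) (hv : Valid n l) :
    ∀ w : Equiv.Perm (Fin n), inv' (w * wordProd n l) ≤ inv' w + l.length := by
  induction l with
  | nil => intro w; simp [wordProd_nil]
  | cons c l ih =>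
    intro w
    have hc : 1 ≤ c ∧ c < n := hv c List.mem_cons_self
    have hv' : Valid n l := fun i hi => hv i (List.mem_cons_of_mem c hi)
    rw [wordProd_cons, ← mul_assoc]
    calc inv' (w * gen n c * wordProd n l) ≤ inv' (w * gen n c) + l.length := ih hv' _
      _ ≤ inv' w + (c :: l).length := by
          rcases inv_mul_gen_cases hc w with h | h <;> simp [List.length_cons] <;> omega

theorem inv_wordProd_le (l : List ℕ) (hv : Valid n l) : inv' (wordProd n l) ≤ l.length := by
  have := inv_mul_wordProd_le l hv 1
  rwa [one_mul, inv_one, zero_add] at this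

theorem exists_descent {w : Equiv.Perm (Fin n)} (hw : w ≠ 1) :
    ∃ i : ℕ, ∃ _ : 1 ≤ i, ∃ h2 : i < n, w ⟨i, h2⟩ < w ⟨i - 1, by omega⟩ := by
  by_contra hno
  push_neg at hno
  apply hw
  apply eq_one_of_strictMono
  rcases n with _ | m
  · intro a; exact absurd a.isLt (by omega)
  · rw [Fin.strictMono_iff_lt_succ]
    intro i
    have hi : 1 ≤ (i : ℕ) + 1 ∧ (i : ℕ) + 1 < m + 1 := ⟨by omega, by omega⟩
    have := hno ((i : ℕ) + 1) hi.1 hi.2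
    have hne := apply_adj_ne hi.1 hi.2 w
    have hcast : (i.castSucc : Fin (m+1)) = ⟨(i : ℕ) + 1 - 1, by omega⟩ := by
      simp [Fin.ext_iff]
    have hsucc : (i.succ : Fin (m+1)) = ⟨(i : ℕ) + 1, hi.2⟩ := by
      simp [Fin.ext_iff]
    rw [hcast, hsucc]
    rcases lt_or_gt_of_ne hne with h | h
    · exact h
    · exact absurd h (not_lt.2 this)

theorem exists_word (w : Equiv.Perm (Fin n)) :
    ∃ l : List ℕ, Valid n l ∧ wordProd n l = w ∧ l.length = inv' w := by
  generalize hm : inv' w = m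
  induction m using Nat.strong_induction_on generalizing w with
  | _ m ih =>
    by_cases hw : w = 1
    · subst hw
      rw [inv_one] at hm
      exact ⟨[], fun i hi => absurd hi List.not_mem_nil, wordProd_nil, by simp [← hm]⟩
    · obtain ⟨i, h1, h2, hdesc⟩ := exists_descent hw
      have hi : 1 ≤ i ∧ i < n := ⟨h1, h2⟩
      have hdrop := inv_mul_gen_descent hi.1 hi.2 hdesc
      have hlt : inv' (w * gen n i) < m := by omega
      obtain ⟨l, hlv, hlp, hll⟩ := ih _ hlt (w * gen n i) rfl
      refine ⟨l ++ [i], ?_, ?_, ?_⟩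
      · intro j hj
        rcases List.mem_append.1 hj with h | h
        · exact hlv j h
        · simp at h; subst h; exact hi
      · rw [wordProd_append, hlp]
        show w * gen n i * wordProd n [i] = w
        rw [show wordProd n [i] = gen n i by simp [wordProd], mul_assoc, gen_mul_self, mul_one]
      · simp [hll]; omega

theorem len_eq_inv (w : Equiv.Perm (Fin n)) : len n w = inv' w := by
  obtain ⟨l, hv, hp, hlen⟩ := exists_word w
  apply le_antisymm
  · exact Nat.sInf_le ⟨l, hv, hp, hlen⟩
  · unfold len
    refine le_csInf ⟨l.length, ⟨l, hv, hp, rfl⟩⟩ ?_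
    rintro r ⟨m, hmv, hmp, hml⟩
    rw [← hmp, ← hml]
    exact inv_wordProd_le m hmv

theorem len_one : len n (1 : Equiv.Perm (Fin n)) = 0 := by rw [len_eq_inv, inv_one]

theorem len_mul_gen_cases {i : ℕ} (hv : 1 ≤ i ∧ i < n) (w : Equiv.Perm (Fin n)) :
    len n (w * gen n i) = len n w + 1 ∨ len n (w * gen n i) + 1 = len n w := by
  rw [len_eq_inv, len_eq_inv]; exact inv_mul_gen_cases hv w

theorem len_mul_gen_ne {i : ℕ} (hv : 1 ≤ i ∧ i < n) (w : Equiv.Perm (Fin n)) :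
    len n (w * gen n i) ≠ len n w := by
  rcases len_mul_gen_cases hv w with h | h <;> omega

theorem len_wordProd_le (l : List ℕ) (hv : Valid n l) : len n (wordProd n l) ≤ l.length := by
  rw [len_eq_inv]; exact inv_wordProd_le l hv

theorem len_inv_eq (w : Equiv.Perm (Fin n)) : len n w⁻¹ = len n w := by
  rw [len_eq_inv, len_eq_inv, inv_inv_eq]

theorem exists_reduced_word (w : Equiv.Perm (Fin n)) :
    ∃ l : List ℕ, Valid n l ∧ wordProd n l = w ∧ l.length = len n w := by
  rw [len_eq_inv]; exact exists_word w

/-! ### Strong exchange -/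

theorem swap_apply_val {p q x : Fin n} :
    ((Equiv.swap p q x : Fin n) : ℕ)
      = if (x : ℕ) = (p : ℕ) then (q : ℕ) else if (x : ℕ) = (q : ℕ) then (p : ℕ) else (x : ℕ) := by
  rcases eq_or_ne x p with rfl | hxp
  · rw [Equiv.swap_apply_left, if_pos rfl]
  · rcases eq_or_ne x q with rfl | hxq
    · rw [Equiv.swap_apply_right, if_neg (fun h => hxp (Fin.ext h)), if_pos rfl]
    · rw [Equiv.swap_apply_of_ne_of_ne hxp hxq,
        if_neg (fun h => hxp (Fin.ext h)), if_neg (fun h => hxq (Fin.ext h))]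

theorem swap_mul_eq (a b : Fin n) (w : Equiv.Perm (Fin n)) :
    Equiv.swap a b * w = w * Equiv.swap (w⁻¹ a) (w⁻¹ b) := by
  have := Equiv.swap_apply_apply w (w⁻¹ a) (w⁻¹ b)
  rw [w.apply_inv_self, w.apply_inv_self] at this
  rw [this]
  group

theorem conj_swap (u : Equiv.Perm (Fin n)) (x y : Fin n) :
    u * Equiv.swap x y * u⁻¹ = Equiv.swap (u x) (u y) :=
  (Equiv.swap_apply_apply u x y).symm

theorem inv_le_swap_mul : ∀ d : ℕ, ∀ w : Equiv.Perm (Fin n), ∀ a b : Fin n, a < b →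
    w⁻¹ a < w⁻¹ b → ((w⁻¹ b : ℕ) - (w⁻¹ a : ℕ)) = d →
    inv' w ≤ inv' (Equiv.swap a b * w) := by
  intro d
  induction d using Nat.strong_induction_on with
  | _ d ih =>
  intro w a b hab hpq hd
  set p := w⁻¹ a with hpdef
  set q := w⁻¹ b with hqdef
  have hpq' : (p : ℕ) < (q : ℕ) := hpq
  have hqn : (q : ℕ) < n := q.isLt
  have hj1 : 1 ≤ (p : ℕ) + 1 := by omega
  have hj2 : (p : ℕ) + 1 < n := by omega
  set j := (p : ℕ) + 1 with hjdef
  have hpj : (⟨j - 1, by omega⟩ : Fin n) = p := Fin.ext (show j - 1 = (p : ℕ) by omega)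
  set q'' : Fin n := ⟨j, hj2⟩ with hq''def
  have hq''v : (q'' : ℕ) = (p : ℕ) + 1 := rfl
  have hgen : gen n j = Equiv.swap p q'' := by
    rw [gen_eq_swap hj1 hj2, hpj]
  have hwp : w p = a := w.apply_inv_self a
  have hwq : w q = b := w.apply_inv_self b
  by_cases hcase : (q : ℕ) = (p : ℕ) + 1
  · -- adjacent case
    have hqq : q = q'' := Fin.ext (by omega)
    have hasc : w ⟨j - 1, by omega⟩ < w ⟨j, hj2⟩ := by
      rw [hpj]
      show w p < w q''
      rw [← hqq, hwp, hwq]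
      exact hab
    have := inv_mul_gen_ascent hj1 hj2 hasc
    have hsw : Equiv.swap a b * w = w * gen n j := by
      rw [swap_mul_eq, hgen, ← hpdef, ← hqdef, hqq]
    rw [hsw, this]
    omega
  · -- non-adjacent: move p one step right
    set u := w * gen n j with hudef
    have huinv : u⁻¹ = gen n j * w⁻¹ := by
      rw [hudef, mul_inv_rev, gen_inv]
    have hua : u⁻¹ a = q'' := by
      rw [huinv, Equiv.Perm.mul_apply, ← hpdef, hgen, Equiv.swap_apply_left]
    have hub : u⁻¹ b = q := by
      rw [huinv, Equiv.Perm.mul_apply, ← hqdef, hgen]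
      refine Equiv.swap_apply_of_ne_of_ne (fun h => ?_) (fun h => ?_) <;>
        · rw [Fin.ext_iff] at h; omega
    have hmeas : ((u⁻¹ b : ℕ) - (u⁻¹ a : ℕ)) < d := by
      rw [hua, hub]; omega
    have hult : u⁻¹ a < u⁻¹ b := by
      rw [hua, hub, Fin.lt_def]; omega
    have ihu := ih _ hmeas u a b hab hult rfl
    have hassoc : Equiv.swap a b * u = (Equiv.swap a b * w) * gen n j := by
      rw [hudef, mul_assoc]
    rcases lt_trichotomy a (w q'') with hda | hda | hda
    · -- ascent at w
      have hasc : w ⟨j - 1, by omega⟩ < w ⟨j, hj2⟩ := by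
        rw [hpj, hwp]; exact hda
      have h1 : inv' u = inv' w + 1 := inv_mul_gen_ascent hj1 hj2 hasc
      have h2 : inv' (Equiv.swap a b * u) ≤ inv' (Equiv.swap a b * w) + 1 := by
        rw [hassoc]
        rcases inv_mul_gen_cases ⟨hj1, hj2⟩ (Equiv.swap a b * w) with h | h <;> omega
      omega
    · -- w q'' = a impossible
      exfalso
      have : q'' = p := w.injective (by rw [hwp, hda])
      rw [Fin.ext_iff] at this
      omega
    · -- descent at w
      have hdesc : w ⟨j, hj2⟩ < w ⟨j - 1, by omega⟩ := by
        rw [hpj, hwp]; exact hda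
      have h1 : inv' u + 1 = inv' w := inv_mul_gen_descent hj1 hj2 hdesc
      have hv1 : (Equiv.swap a b * w) ⟨j - 1, by omega⟩ = b := by
        rw [Equiv.Perm.mul_apply, hpj, hwp, Equiv.swap_apply_left]
      have hv2 : (Equiv.swap a b * w) ⟨j, hj2⟩ = w q'' := by
        rw [Equiv.Perm.mul_apply]
        show Equiv.swap a b (w q'') = w q''
        refine Equiv.swap_apply_of_ne_of_ne (ne_of_lt hda) (fun h => ?_)
        have : q'' = q := w.injective (by rw [hwq, h])
        rw [Fin.ext_iff] at this
        omega
      have hdesc2 : (Equiv.swap a b * w) ⟨j, hj2⟩ < (Equiv.swap a b * w) ⟨j - 1, by omega⟩ := by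
        rw [hv1, hv2]
        exact hda.trans hab
      have h2 : inv' (Equiv.swap a b * u) + 1 = inv' (Equiv.swap a b * w) := by
        rw [hassoc]
        exact inv_mul_gen_descent hj1 hj2 hdesc2
      omega

theorem pos_lt_of_len_swap_lt {a b : Fin n} (hab : a < b) {w : Equiv.Perm (Fin n)}
    (h : len n (Equiv.swap a b * w) < len n w) : w⁻¹ b < w⁻¹ a := by
  rcases lt_trichotomy (w⁻¹ a) (w⁻¹ b) with h' | h' | h'
  · exfalso
    have := inv_le_swap_mul _ w a b hab h' rfl
    rw [len_eq_inv, len_eq_inv] at h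
    omega
  · exfalso
    have : a = b := by
      have := congrArg w h'
      rwa [w.apply_inv_self, w.apply_inv_self] at this
    exact hab.ne this
  · exact h'

theorem find_flip (G : ℕ → Prop) : ∀ r : ℕ, G 0 → ¬ G r → ∃ k < r, G k ∧ ¬ G (k + 1) := by
  intro r
  induction r with
  | zero => intro h0 hr; exact absurd h0 hr
  | succ r ih =>
    intro h0 hr
    by_cases hGr : G r
    · exact ⟨r, Nat.lt_succ_self r, hGr, hr⟩
    · obtain ⟨k, hk, h1, h2⟩ := ih h0 hGr
      exact ⟨k, hk.trans (Nat.lt_succ_self r), h1, h2⟩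

theorem take_succ_eq (l : List ℕ) (k : ℕ) (hk : k < l.length) :
    l.take (k + 1) = l.take k ++ [l.getD k 0] := by
  rw [List.take_succ, List.getElem?_eq_getElem hk, List.getD_eq_getElem l 0 hk]
  rfl

theorem strong_exchange (l : List ℕ) (hv : Valid n l) (a b : Fin n) (hab : a < b)
    (h : (wordProd n l)⁻¹ b < (wordProd n l)⁻¹ a) :
    ∃ k < l.length, wordProd n (l.eraseIdx k) = Equiv.swap a b * wordProd n l := by
  set G : ℕ → Prop := fun k => (wordProd n (l.take k))⁻¹ a < (wordProd n (l.take k))⁻¹ b with hG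
  have h0 : G 0 := by
    simp only [hG, List.take_zero, wordProd_nil, inv_one, Equiv.Perm.one_apply]
    exact hab
  have hr : ¬ G l.length := by
    simp only [hG, List.take_length]
    exact not_lt.2 h.le
  obtain ⟨k, hk, Gk, nGk1⟩ := find_flip G l.length h0 hr
  set c := l.getD k 0 with hcdef
  have hcm : c ∈ l := by
    rw [hcdef, List.getD_eq_getElem l 0 hk]
    exact List.getElem_mem hk
  have hc : 1 ≤ c ∧ c < n := hv c hcm
  set u := wordProd n (l.take k) with hudef
  have htake : wordProd n (l.take (k + 1)) = u * gen n c := by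
    rw [take_succ_eq l k hk, wordProd_append, wordProd_singleton]
  set pc : Fin n := ⟨c - 1, by omega⟩ with hpcdef
  set qc : Fin n := ⟨c, hc.2⟩ with hqcdef
  have hgen : gen n c = Equiv.swap pc qc := gen_eq_swap hc.1 hc.2
  -- the flip forces u⁻¹ a = pc, u⁻¹ b = qc
  have hmain : u⁻¹ a = pc ∧ u⁻¹ b = qc := by
    have hGk : (u⁻¹ a : ℕ) < (u⁻¹ b : ℕ) := Gk
    have hab' : u⁻¹ a ≠ u⁻¹ b := fun h => hab.ne (by
      have := congrArg u h; rwa [u.apply_inv_self, u.apply_inv_self] at this)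
    have hnG : ¬ ((gen n c) (u⁻¹ a) < (gen n c) (u⁻¹ b)) := by
      intro hcon
      apply nGk1
      show (wordProd n (l.take (k+1)))⁻¹ a < (wordProd n (l.take (k+1)))⁻¹ b
      rw [htake, mul_inv_rev, gen_inv, Equiv.Perm.mul_apply, Equiv.Perm.mul_apply]
      exact hcon
    rw [hgen] at hnG
    have h1 := @swap_apply_val n pc qc (u⁻¹ a)
    have h2 := @swap_apply_val n pc qc (u⁻¹ b)
    have hpcv : (pc : ℕ) = c - 1 := rfl
    have hqcv : (qc : ℕ) = c := rfl
    have hnG' : ((Equiv.swap pc qc (u⁻¹ b) : Fin n) : ℕ) ≤ ((Equiv.swap pc qc (u⁻¹ a) : Fin n) : ℕ) :=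
      not_lt.1 hnG
    have habn : (u⁻¹ a : ℕ) ≠ (u⁻¹ b : ℕ) := fun hh => hab' (Fin.ext hh)
    have hc1 : 1 ≤ c := hc.1
    refine ⟨Fin.ext ?_, Fin.ext ?_⟩ <;>
      · split_ifs at h1 h2 <;> omega
  have hconj : u * gen n c * u⁻¹ = Equiv.swap a b := by
    rw [hgen, conj_swap, ← hmain.1, ← hmain.2, u.apply_inv_self, u.apply_inv_self]
  refine ⟨k, hk, ?_⟩
  have herase : l.eraseIdx k = l.take k ++ l.drop (k + 1) := List.eraseIdx_eq_take_drop_succ l k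
  have hsplit : wordProd n l = (u * gen n c) * wordProd n (l.drop (k + 1)) := by
    rw [← htake, ← wordProd_append, List.take_append_drop]
  have key : Equiv.swap a b * wordProd n l = u * wordProd n (l.drop (k + 1)) := by
    rw [hsplit, ← hconj]
    calc u * gen n c * u⁻¹ * (u * gen n c * wordProd n (l.drop (k + 1)))
        = u * (gen n c * gen n c) * wordProd n (l.drop (k + 1)) := by group
      _ = u * wordProd n (l.drop (k + 1)) := by rw [gen_mul_self, mul_one]
  rw [herase, wordProd_append, ← hudef, key]

/-! ### Deletion -/

theorem valid_of_sublist {l t : List ℕ} (hv : Valid n l) (ht : t.Sublist l) : Valid n t :=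
  fun i hi => hv i (ht.subset hi)

theorem strong_exchange' (l : List ℕ) (hv : Valid n l) (a b : Fin n) (hab : a ≠ b)
    (hlen : len n (Equiv.swap a b * wordProd n l) < len n (wordProd n l)) :
    ∃ k < l.length, wordProd n (l.eraseIdx k) = Equiv.swap a b * wordProd n l := by
  rcases lt_or_gt_of_ne hab with h | h
  · exact strong_exchange l hv a b h (pos_lt_of_len_swap_lt h hlen)
  · rw [Equiv.swap_comm] at hlen ⊢
    exact strong_exchange l hv b a h (pos_lt_of_len_swap_lt h hlen)

theorem len_take_eq (l : List ℕ) (hv : Valid n l)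
    (hmono : ∀ k < l.length, ¬ len n (wordProd n (l.take (k + 1))) < len n (wordProd n (l.take k))) :
    ∀ m ≤ l.length, len n (wordProd n (l.take m)) = m := by
  intro m
  induction m with
  | zero => intro _; simp [wordProd_nil, len_one]
  | succ m ihm =>
    intro hm
    have hm' : m < l.length := by omega
    have ih := ihm (by omega)
    have hc : 1 ≤ l.getD m 0 ∧ l.getD m 0 < n := by
      apply hv
      rw [List.getD_eq_getElem l 0 hm']
      exact List.getElem_mem hm'
    have htake : wordProd n (l.take (m + 1)) = wordProd n (l.take m) * gen n (l.getD m 0) := by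
      rw [take_succ_eq l m hm', wordProd_append, wordProd_singleton]
    have := hmono m hm'
    rw [htake] at this ⊢
    rcases len_mul_gen_cases hc (wordProd n (l.take m)) with h | h <;> omega

theorem exists_drop (l : List ℕ) (hv : Valid n l) (h : len n (wordProd n l) < l.length) :
    ∃ k < l.length, len n (wordProd n (l.take (k + 1))) < len n (wordProd n (l.take k)) := by
  by_contra hno
  push_neg at hno
  have := len_take_eq l hv (fun k hk => not_lt.2 (hno k hk)) l.length le_rfl
  rw [List.take_length] at this
  omega

theorem deletion_aux : ∀ N : ℕ, ∀ l : List ℕ, Valid n l → l.length ≤ N →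
    ∃ t : List ℕ, t.Sublist l ∧ wordProd n t = wordProd n l ∧ t.length = len n (wordProd n l) := by
  intro N
  induction N with
  | zero =>
    intro l _ hN
    have : l = [] := List.length_eq_zero_iff.1 (by omega)
    subst this
    exact ⟨[], List.Sublist.refl _, rfl, by simp [wordProd_nil, len_one]⟩
  | succ N ih =>
    intro l hv hN
    by_cases heq : l.length = len n (wordProd n l)
    · exact ⟨l, List.Sublist.refl _, rfl, heq⟩
    · have hlt : len n (wordProd n l) < l.length :=
        lt_of_le_of_ne (len_wordProd_le l hv) (fun h => heq h.symm)
      obtain ⟨k, hk, hdrop⟩ := exists_drop l hv hlt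
      set c := l.getD k 0 with hcdef
      have hc : 1 ≤ c ∧ c < n := by
        apply hv
        rw [hcdef, List.getD_eq_getElem l 0 hk]
        exact List.getElem_mem hk
      set u := wordProd n (l.take k) with hudef
      have htake : wordProd n (l.take (k + 1)) = u * gen n c := by
        rw [take_succ_eq l k hk, wordProd_append, wordProd_singleton]
      set pc : Fin n := ⟨c - 1, by omega⟩ with hpcdef
      set qc : Fin n := ⟨c, hc.2⟩ with hqcdef
      have hgen : gen n c = Equiv.swap pc qc := gen_eq_swap hc.1 hc.2
      have hconj : Equiv.swap (u pc) (u qc) * u = u * gen n c := by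
        rw [hgen, ← conj_swap u pc qc]
        group
      have hne : u pc ≠ u qc := by
        intro h
        have := u.injective h
        rw [Fin.ext_iff] at this
        have h1 : (pc : ℕ) = c - 1 := rfl
        have h2 : (qc : ℕ) = c := rfl
        omega
      have hlen2 : len n (Equiv.swap (u pc) (u qc) * u) < len n u := by
        rw [hconj, ← htake]
        exact hdrop
      have hvtake : Valid n (l.take k) := valid_of_sublist hv (List.take_sublist k l)
      obtain ⟨m, hm, hexch⟩ := strong_exchange' (l.take k) hvtake (u pc) (u qc) hne
        (by rw [hudef] at hlen2 ⊢; exact hlen2)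
      set l' := (l.take k).eraseIdx m ++ l.drop (k + 1) with hl'def
      have hl'prod : wordProd n l' = wordProd n l := by
        rw [hl'def, wordProd_append, hexch, hconj, ← htake, ← wordProd_append,
          List.take_append_drop]
      have hl'sub : l'.Sublist l := by
        have s1 : ((l.take k).eraseIdx m).Sublist (l.take k) := List.eraseIdx_sublist _ m
        have s2 : (l.take k).Sublist (l.take (k + 1)) := by
          rw [take_succ_eq l k hk]
          exact List.sublist_append_left _ _
        have s3 : l'.Sublist (l.take (k + 1) ++ l.drop (k + 1)) :=
          List.Sublist.append (s1.trans s2) (List.Sublist.refl _)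
        exact (List.take_append_drop (k + 1) l) ▸ s3
      have hl'len : l'.length ≤ N := by
        have h1 : (l.take k).length = k := by rw [List.length_take]; omega
        have h2 : ((l.take k).eraseIdx m).length + 1 = k := by
          rw [List.length_eraseIdx_add_one (by omega : m < (l.take k).length), h1]
        have h3 : (l.drop (k + 1)).length = l.length - (k + 1) := List.length_drop
        rw [hl'def, List.length_append]
        omega
      obtain ⟨t, hts, htp, htl⟩ := ih l' (valid_of_sublist hv hl'sub) hl'len
      exact ⟨t, hts.trans hl'sub, by rw [htp, hl'prod], by rw [htl, hl'prod]⟩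

theorem deletion (l : List ℕ) (hv : Valid n l) :
    ∃ t : List ℕ, t.Sublist l ∧ wordProd n t = wordProd n l
      ∧ t.length = len n (wordProd n l) :=
  deletion_aux l.length l hv le_rfl

/-! ### Chain (Bruhat) order -/

def Rstep (u v : Equiv.Perm (Fin n)) : Prop :=
  len n u < len n v ∧ ∃ a b : Fin n, a ≠ b ∧ u = v * Equiv.swap a b

def leB (x w : Equiv.Perm (Fin n)) : Prop := Relation.ReflTransGen Rstep x w

theorem leB_subword {x w : Equiv.Perm (Fin n)} (h : leB x w) :
    ∀ l : List ℕ, Valid n l → wordProd n l = w → l.length = len n w →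
    ∃ t, t.Sublist l ∧ wordProd n t = x ∧ t.length = len n x := by
  induction h with
  | refl =>
    intro l hv hp hl
    exact ⟨l, List.Sublist.refl _, hp, hl⟩
  | tail hxy hyv ih =>
    rename_i y v
    intro l hv hp hl
    obtain ⟨hylen, a, b, hab, hy⟩ := hyv
    have hne : v a ≠ v b := fun h => hab (v.injective h)
    have hconj : Equiv.swap (v a) (v b) * v = y := by
      rw [hy, ← conj_swap v a b]
      group
    have hlen' : len n (Equiv.swap (v a) (v b) * wordProd n l) < len n (wordProd n l) := by
      rw [hp, hconj]
      exact hylen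
    obtain ⟨k, hkl, hkprod⟩ := strong_exchange' l hv (v a) (v b) hne hlen'
    have hkprod' : wordProd n (l.eraseIdx k) = y := by rw [hkprod, hp, hconj]
    obtain ⟨t₀, ht₀s, ht₀p, ht₀l⟩ := deletion (l.eraseIdx k)
      (valid_of_sublist hv (List.eraseIdx_sublist l k))
    obtain ⟨t, hts, htp, htl⟩ := ih t₀ (valid_of_sublist hv (ht₀s.trans (List.eraseIdx_sublist l k)))
      (by rw [ht₀p, hkprod']) (by rw [ht₀l, hkprod'])
    exact ⟨t, (hts.trans ht₀s).trans (List.eraseIdx_sublist l k), htp, htl⟩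

theorem sublist_concat_cases {α : Type*} (t a' : List α) (c : α) (h : t.Sublist (a' ++ [c])) :
    t.Sublist a' ∨ ∃ t', t = t' ++ [c] ∧ t'.Sublist a' := by
  have hrev : t.reverse.Sublist (c :: a'.reverse) := by
    have := h.reverse
    rwa [List.reverse_append, List.reverse_singleton, List.singleton_append] at this
  rcases List.sublist_cons_iff.1 hrev with h1 | ⟨r, hr, hrs⟩
  · left
    have := h1.reverse
    rwa [List.reverse_reverse, List.reverse_reverse] at this
  · right
    refine ⟨r.reverse, ?_, ?_⟩
    · have := congrArg List.reverse hr
      rwa [List.reverse_reverse, List.reverse_cons] at this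
    · have := hrs.reverse
      rwa [List.reverse_reverse] at this

def Pst (n N : ℕ) : Prop := ∀ w : Equiv.Perm (Fin n), ∀ l t : List ℕ, Valid n l →
  wordProd n l = w → l.length = len n w → len n w ≤ N → t.Sublist l →
  t.length = len n (wordProd n t) → leB (wordProd n t) w

def Qst (n N : ℕ) : Prop := ∀ w x : Equiv.Perm (Fin n), ∀ c : ℕ, 1 ≤ c → c < n →
  len n w ≤ N → leB x w → len n x < len n (x * gen n c) → len n w < len n (w * gen n c) →
  leB (x * gen n c) (w * gen n c)

def Q2st (n N : ℕ) : Prop := ∀ y x : Equiv.Perm (Fin n), ∀ c : ℕ, 1 ≤ c → c < n →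
  len n y ≤ N → leB x y → len n (y * gen n c) < len n y → len n x < len n (x * gen n c) →
  leB x (y * gen n c)

theorem PQ : ∀ N : ℕ, Pst n N ∧ Qst n N ∧ Q2st n N := by
  intro N
  induction N using Nat.strong_induction_on with
  | _ N ih =>
  refine ⟨?_, ?_, ?_⟩
  · -- Pst
    intro w l t hv hp hl hN hsub hred
    rcases lt_or_eq_of_le hN with hltN | hEq
    · exact (ih _ hltN).1 w l t hv hp hl le_rfl hsub hred
    rcases List.eq_nil_or_concat l with rfl | ⟨a', c, rfl⟩
    · have ht : t = [] := List.sublist_nil.mp hsub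
      subst ht
      exact hp ▸ Relation.ReflTransGen.refl
    · rw [List.concat_eq_append] at *
      have hc : 1 ≤ c ∧ c < n := hv c (by simp)
      have hva : Valid n a' := valid_of_sublist hv (List.sublist_append_left _ _)
      set pc : Fin n := ⟨c - 1, by omega⟩ with hpcdef
      set qc : Fin n := ⟨c, hc.2⟩ with hqcdef
      have hgen : gen n c = Equiv.swap pc qc := gen_eq_swap hc.1 hc.2
      have hnepq : pc ≠ qc := by
        intro h; rw [Fin.ext_iff] at h
        have h1 : (pc : ℕ) = c - 1 := rfl
        have h2 : (qc : ℕ) = c := rfl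
        omega
      set w' := wordProd n a' with hw'def
      have hpw : w = w' * gen n c := by
        rw [← hp, wordProd_append, wordProd_singleton]
      have hlenw : len n w = a'.length + 1 := by
        rw [← hl]; simp
      have hlw' : a'.length = len n w' := by
        have h1 : len n w' ≤ a'.length := len_wordProd_le a' hva
        rcases len_mul_gen_cases hc w' with hA | hA <;> rw [← hpw] at hA <;> omega
      have hNpos : 1 ≤ N := by omega
      have hw'N : len n w' ≤ N - 1 := by omega
      have hstep : Rstep w' w := by
        refine ⟨by omega, pc, qc, hnepq, ?_⟩
        rw [hpw, mul_assoc, ← hgen, gen_mul_self, mul_one]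
      rcases sublist_concat_cases t a' c hsub with hta | ⟨t', rfl, hta⟩
      · have hP := (ih (N - 1) (by omega)).1 w' a' t hva rfl hlw' hw'N hta hred
        exact hP.tail hstep
      · set x' := wordProd n t' with hx'def
        have hxprod : wordProd n (t' ++ [c]) = x' * gen n c := by
          rw [wordProd_append, wordProd_singleton]
        have hredx : (t' ++ [c]).length = len n (x' * gen n c) := by rw [← hxprod]; exact hred
        have hlx' : t'.length = len n x' := by
          have h1 : len n x' ≤ t'.length := len_wordProd_le t' (valid_of_sublist hva hta)
          have h2 : (t' ++ [c]).length = t'.length + 1 := by simp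
          rcases len_mul_gen_cases hc x' with hA | hA <;> omega
        have hP := (ih (N - 1) (by omega)).1 w' a' t' hva rfl hlw' hw'N hta hlx'
        have hQ := (ih (N - 1) (by omega)).2.1 w' x' c hc.1 hc.2 hw'N hP
          (by
            have h2 : (t' ++ [c]).length = t'.length + 1 := by simp
            omega) (by rw [← hpw]; omega)
        rw [← hpw, ← hxprod] at hQ
        exact hQ
  · -- Qst
    intro w x c h1c h2c hN hxw hxasc hwasc
    rcases Relation.ReflTransGen.cases_tail hxw with heq | ⟨y, hxy, hyw⟩
    · subst heq; exact Relation.ReflTransGen.refl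
    obtain ⟨hylen, a, b, hab, hy⟩ := hyw
    have hNpos : 1 ≤ N := by omega
    set pc : Fin n := ⟨c - 1, by omega⟩ with hpcdef
    set qc : Fin n := ⟨c, h2c⟩ with hqcdef
    have hgen : gen n c = Equiv.swap pc qc := gen_eq_swap h1c h2c
    have hnepq : pc ≠ qc := by
      intro h; rw [Fin.ext_iff] at h
      have h1 : (pc : ℕ) = c - 1 := rfl
      have h2 : (qc : ℕ) = c := rfl
      omega
    rcases len_mul_gen_cases ⟨h1c, h2c⟩ y with hyc | hyc
    · have hQ := (ih (N - 1) (by omega)).2.1 y x c h1c h2c (by omega) hxy hxasc (by omega)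
      refine hQ.tail ?_
      refine ⟨by omega, gen n c a, gen n c b, fun h => hab ((gen n c).injective h), ?_⟩
      have hconj : gen n c * Equiv.swap a b * gen n c = Equiv.swap (gen n c a) (gen n c b) := by
        rw [← conj_swap (gen n c) a b, gen_inv]
      calc y * gen n c = w * Equiv.swap a b * gen n c := by rw [hy]
        _ = w * gen n c * (gen n c * Equiv.swap a b * gen n c) := by
            rw [show w * gen n c * (gen n c * Equiv.swap a b * gen n c)
              = w * (gen n c * gen n c) * Equiv.swap a b * gen n c by group, gen_mul_self]
            group
        _ = w * gen n c * Equiv.swap (gen n c a) (gen n c b) := by rw [hconj]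
    · have hyy : y * gen n c * gen n c = y := by rw [mul_assoc, gen_mul_self, mul_one]
      have hQ2 := (ih (N - 1) (by omega)).2.2 y x c h1c h2c (by omega) hxy (by omega) hxasc
      have hQ := (ih (N - 1) (by omega)).2.1 (y * gen n c) x c h1c h2c (by omega) hQ2 hxasc
        (by rw [hyy]; omega)
      rw [hyy] at hQ
      have h3 : leB (x * gen n c) w := hQ.tail ⟨hylen, a, b, hab, hy⟩
      refine h3.tail ?_
      refine ⟨hwasc, pc, qc, hnepq, ?_⟩
      rw [mul_assoc, ← hgen, gen_mul_self, mul_one]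
  · -- Q2st
    intro y x c h1c h2c hN hxy hdesc hxasc
    have hylen : len n y = len n (y * gen n c) + 1 := by
      rcases len_mul_gen_cases ⟨h1c, h2c⟩ y with hA | hA <;> omega
    have hNpos : 1 ≤ N := by omega
    obtain ⟨bw, hbv, hbp, hbl⟩ := exists_reduced_word (y * gen n c)
    have hdv : Valid n (bw ++ [c]) := by
      intro i hi
      rcases List.mem_append.1 hi with h | h
      · exact hbv i h
      · simp at h; subst h; exact ⟨h1c, h2c⟩
    have hdp : wordProd n (bw ++ [c]) = y := by
      rw [wordProd_append, wordProd_singleton, hbp, mul_assoc, gen_mul_self, mul_one]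
    have hdl : (bw ++ [c]).length = len n y := by simp [hbl]; omega
    obtain ⟨t, hts, htp, htl⟩ := leB_subword hxy (bw ++ [c]) hdv hdp hdl
    rcases sublist_concat_cases t bw c hts with htb | ⟨t', rfl, htb⟩
    · have hP := (ih (N - 1) (by omega)).1 (y * gen n c) bw t hbv hbp hbl (by omega) htb
        (by rw [htp, htl])
      rwa [htp] at hP
    · exfalso
      have hx' : wordProd n t' = x * gen n c := by
        have : wordProd n (t' ++ [c]) = wordProd n t' * gen n c := by
          rw [wordProd_append, wordProd_singleton]
        rw [this] at htp
        rw [← htp, mul_assoc, gen_mul_self, mul_one]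
      have h1 : len n (x * gen n c) ≤ t'.length := by
        rw [← hx']
        exact len_wordProd_le t' (valid_of_sublist hbv htb)
      have h2 : (t' ++ [c]).length = t'.length + 1 := by simp
      omega

/-! ### Masks -/

def maskWord (l : List ℕ) (S : Finset ℕ) : List ℕ :=
  ((List.range l.length).filter (fun j => decide (j ∈ S))).map (fun j => l.getD j 0)

theorem maskProd_eq (l : List ℕ) (S : Finset ℕ) :
    maskProd n l S = wordProd n (maskWord l S) := rfl

theorem getD_concat_length (l₀ : List ℕ) (a : ℕ) : (l₀ ++ [a]).getD l₀.length 0 = a := by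
  rw [List.getD_append_right _ _ _ _ le_rfl, Nat.sub_self]
  rfl

theorem maskWord_concat (l₀ : List ℕ) (a : ℕ) (S : Finset ℕ) :
    maskWord (l₀ ++ [a]) S
      = maskWord l₀ S ++ (if l₀.length ∈ S then [a] else []) := by
  unfold maskWord
  have hlen : (l₀ ++ [a]).length = l₀.length + 1 := by simp
  rw [hlen, List.range_succ, List.filter_append, List.map_append]
  congr 1
  · apply List.map_congr_left
    intro j hj
    have hj' : j < l₀.length := List.mem_range.1 (List.mem_of_mem_filter hj)
    exact List.getD_append _ _ _ _ hj'
  · rw [List.filter_singleton]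
    by_cases hmem : l₀.length ∈ S <;> simp [hmem, getD_concat_length]

theorem maskWord_sublist (l : List ℕ) (S : Finset ℕ) : (maskWord l S).Sublist l := by
  induction l using List.reverseRecOn with
  | nil => simp [maskWord]
  | append_singleton l₀ a ihw =>
    rw [maskWord_concat]
    apply List.Sublist.append ihw
    by_cases hmem : l₀.length ∈ S <;> simp [hmem]

theorem maskProd_concat (l₀ : List ℕ) (a : ℕ) (S : Finset ℕ) :
    maskProd n (l₀ ++ [a]) S
      = maskProd n l₀ S * (if l₀.length ∈ S then gen n a else 1) := by
  rw [maskProd_eq, maskWord_concat, wordProd_append, maskProd_eq]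
  congr 1
  by_cases hmem : l₀.length ∈ S <;> simp [hmem, wordProd_singleton, wordProd_nil]

theorem maskProd_congr (l : List ℕ) (S T : Finset ℕ)
    (h : ∀ j < l.length, (j ∈ S ↔ j ∈ T)) : maskProd n l S = maskProd n l T := by
  rw [maskProd_eq, maskProd_eq]
  unfold maskWord
  refine congrArg _ (congrArg _ (List.filter_congr ?_))
  intro j hj
  have := h j (List.mem_range.1 hj)
  simp [this]

theorem maskProd_insert_ge (l : List ℕ) (S : Finset ℕ) (m : ℕ) (hm : l.length ≤ m) :
    maskProd n l (insert m S) = maskProd n l S := by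
  apply maskProd_congr
  intro j hj
  rw [Finset.mem_insert]
  constructor
  · rintro (rfl | h)
    · omega
    · exact h
  · exact Or.inr

theorem defectSet_insert_ge (l : List ℕ) (S : Finset ℕ) (m : ℕ) (hm : l.length ≤ m) :
    defectSet n l (insert m S) = defectSet n l S := by
  unfold defectSet
  apply Finset.filter_congr
  intro j hj
  have hj' : j < l.length := Finset.mem_range.1 hj
  have htake : maskProd n (l.take j) (insert m S) = maskProd n (l.take j) S := by
    apply maskProd_insert_ge
    rw [List.length_take]
    omega
  rw [htake]

theorem defectSet_subset (l : List ℕ) (S : Finset ℕ) :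
    defectSet n l S ⊆ Finset.range l.length := Finset.filter_subset _ _

theorem defectSet_concat (l₀ : List ℕ) (a : ℕ) (S : Finset ℕ) :
    defectSet n (l₀ ++ [a]) S
      = if len n (maskProd n l₀ S * gen n a) < len n (maskProd n l₀ S)
        then insert l₀.length (defectSet n l₀ S) else defectSet n l₀ S := by
  ext j
  have hlen : (l₀ ++ [a]).length = l₀.length + 1 := by simp
  by_cases hj : j < l₀.length
  · have htake : (l₀ ++ [a]).take j = l₀.take j := List.take_append_of_le_length (by omega)
    have hgd : (l₀ ++ [a]).getD j 0 = l₀.getD j 0 := List.getD_append _ _ _ _ hj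
    simp only [defectSet, Finset.mem_filter, Finset.mem_range, hlen, htake, hgd]
    split_ifs with hd
    · rw [Finset.mem_insert]
      simp only [defectSet, Finset.mem_filter, Finset.mem_range]
      constructor
      · rintro ⟨h1, h2⟩
        exact Or.inr ⟨hj, h2⟩
      · rintro (rfl | ⟨h1, h2⟩)
        · omega
        · exact ⟨by omega, h2⟩
    · simp only [defectSet, Finset.mem_filter, Finset.mem_range]
      constructor
      · rintro ⟨h1, h2⟩
        exact ⟨hj, h2⟩
      · rintro ⟨h1, h2⟩
        exact ⟨by omega, h2⟩
  · by_cases hj2 : j = l₀.length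
    · subst hj2
      have htake : (l₀ ++ [a]).take l₀.length = l₀ := List.take_left
      have hgd : (l₀ ++ [a]).getD l₀.length 0 = a := getD_concat_length l₀ a
      simp only [defectSet, Finset.mem_filter, Finset.mem_range, hlen, htake, hgd]
      split_ifs with hd
      · simp [hd, Finset.mem_insert]
      · simp only [defectSet, Finset.mem_filter, Finset.mem_range]
        constructor
        · rintro ⟨h1, h2⟩
          exact absurd h2 hd
        · rintro ⟨h1, h2⟩
          omega
    · have h1 : j ∉ Finset.range (l₀ ++ [a]).length := by
        rw [Finset.mem_range]; omega
      have h2 : j ∉ defectSet n (l₀ ++ [a]) S := fun hmem => h1 (defectSet_subset _ _ hmem)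
      have h3 : j ∉ defectSet n l₀ S := fun hmem => by
        have := Finset.mem_range.1 (defectSet_subset _ _ hmem); omega
      simp only [h2, false_iff]
      split_ifs with hd
      · rw [Finset.mem_insert]
        rintro (rfl | hmem)
        · omega
        · exact h3 hmem
      · exact h3

theorem sum_mask : ∀ l : List ℕ, Valid n l →
    (∑ S ∈ (Finset.range l.length).powerset,
      (X : Polynomial ℤ) ^ (len n (maskProd n l S) + (defectSet n l S).card))
      = (1 + X) ^ l.length := by
  intro l
  induction l using List.reverseRecOn with
  | nil =>
    intro _
    simp only [List.length_nil, Finset.range_zero, Finset.powerset_empty, Finset.sum_singleton]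
    have h1 : maskProd n [] (∅ : Finset ℕ) = 1 := rfl
    have h2 : defectSet n [] (∅ : Finset ℕ) = ∅ := rfl
    rw [h1, h2, len_one]
    simp
  | append_singleton l₀ a ihw =>
    intro hv
    have hva : Valid n l₀ := valid_of_sublist hv (List.sublist_append_left _ _)
    have hca : 1 ≤ a ∧ a < n := hv a (by simp)
    have key : ∀ S ∈ (Finset.range l₀.length).powerset,
        (X : Polynomial ℤ) ^ (len n (maskProd n (l₀ ++ [a]) S) + (defectSet n (l₀ ++ [a]) S).card)
        + (X : Polynomial ℤ) ^ (len n (maskProd n (l₀ ++ [a]) (insert l₀.length S))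
            + (defectSet n (l₀ ++ [a]) (insert l₀.length S)).card)
        = (1 + X) * X ^ (len n (maskProd n l₀ S) + (defectSet n l₀ S).card) := by
      intro S hS
      have hSsub : S ⊆ Finset.range l₀.length := Finset.mem_powerset.1 hS
      have hLS : l₀.length ∉ S := fun h => by
        have := Finset.mem_range.1 (hSsub h); omega
      have hm1 : maskProd n (l₀ ++ [a]) S = maskProd n l₀ S := by
        rw [maskProd_concat, if_neg hLS, mul_one]
      have hm2 : maskProd n (l₀ ++ [a]) (insert l₀.length S) = maskProd n l₀ S * gen n a := by
        rw [maskProd_concat, if_pos (Finset.mem_insert_self _ S),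
          maskProd_insert_ge l₀ S l₀.length le_rfl]
      have hd1 := defectSet_concat (n := n) l₀ a S
      have hd2 : defectSet n (l₀ ++ [a]) (insert l₀.length S)
          = if len n (maskProd n l₀ S * gen n a) < len n (maskProd n l₀ S)
            then insert l₀.length (defectSet n l₀ S) else defectSet n l₀ S := by
        rw [defectSet_concat, maskProd_insert_ge l₀ S l₀.length le_rfl,
          defectSet_insert_ge l₀ S l₀.length le_rfl]
      have hLd : l₀.length ∉ defectSet n l₀ S := fun h => by
        have := Finset.mem_range.1 (defectSet_subset l₀ S h); omega
      rcases len_mul_gen_cases hca (maskProd n l₀ S) with hA | hA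
      · have hcond : ¬ (len n (maskProd n l₀ S * gen n a) < len n (maskProd n l₀ S)) := by omega
        rw [hm1, hm2, hd1, hd2, if_neg hcond, hA]
        rw [show len n (maskProd n l₀ S) + 1 + (defectSet n l₀ S).card
          = (len n (maskProd n l₀ S) + (defectSet n l₀ S).card) + 1 from by omega, pow_succ]
        ring
      · have hcond : len n (maskProd n l₀ S * gen n a) < len n (maskProd n l₀ S) := by omega
        rw [hm1, hm2, hd1, hd2, if_pos hcond,
          Finset.card_insert_of_notMem hLd, ← hA]
        rw [show len n (maskProd n l₀ S * gen n a) + 1 + ((defectSet n l₀ S).card + 1)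
          = (len n (maskProd n l₀ S * gen n a) + 1 + (defectSet n l₀ S).card) + 1 from by omega,
          show len n (maskProd n l₀ S * gen n a) + ((defectSet n l₀ S).card + 1)
          = len n (maskProd n l₀ S * gen n a) + 1 + (defectSet n l₀ S).card from by omega,
          pow_succ]
        ring
    have hL1 : (l₀ ++ [a]).length = l₀.length + 1 := by simp
    rw [hL1, Finset.range_add_one, Finset.sum_powerset_insert Finset.notMem_range_self,
      ← Finset.sum_add_distrib, Finset.sum_congr rfl key, ← Finset.mul_sum, ihw hva, pow_succ]
    ring

theorem mask_bruhat {w : Equiv.Perm (Fin n)} (l : List ℕ) (h : IsReducedWord n w l)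
    (S : Finset ℕ) : Bruhat n (maskProd n l S) w := by
  obtain ⟨hv, hp, hl⟩ := h
  have hsub := maskWord_sublist l S
  obtain ⟨t₀, h1, h2, h3⟩ := deletion (maskWord l S) (valid_of_sublist hv hsub)
  have hP := (PQ (len n w)).1 w l t₀ hv hp hl le_rfl (h1.trans hsub) (by rw [h2]; exact h3)
  rw [h2] at hP
  intro l' hl'
  obtain ⟨hv', hp', hlen'⟩ := hl'
  obtain ⟨t, hts, htp, _⟩ := leB_subword hP l' hv' hp' hlen'
  exact ⟨t, hts, by rw [htp, maskProd_eq]⟩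

end Stmt7


open scoped Classical in
/-- `Σ_{x ≤ w} q^{ℓ(x)} P_x(a) = (1+q)^{ℓ(w)}`; equivalently,
`Σ_σ q^{ℓ(π(w^σ)) + |D(σ)|} = (1+q)^r`. -/
theorem stmt7 (n : ℕ) (w : Equiv.Perm (Fin n)) (l : List ℕ) (hl : IsReducedWord n w l) :
    (∑ x : Equiv.Perm (Fin n),
        (if Bruhat n x w then (X : Polynomial ℤ) ^ (len n x) * defPoly n l x else 0))
      = (1 + X) ^ (len n w) ∧
    (∑ S ∈ (Finset.range l.length).powerset,
        (X : Polynomial ℤ) ^ (len n (maskProd n l S) + (defectSet n l S).card))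
      = (1 + X) ^ l.length := by
  obtain ⟨hv, hp, hlen⟩ := hl
  have part2 := Stmt7.sum_mask l hv
  refine ⟨?_, part2⟩
  have hBr : ∀ S : Finset ℕ, Bruhat n (maskProd n l S) w :=
    fun S => Stmt7.mask_bruhat l ⟨hv, hp, hlen⟩ S
  have hx : ∀ x : Equiv.Perm (Fin n),
      (if Bruhat n x w then (X : Polynomial ℤ) ^ (len n x) * defPoly n l x else 0)
      = ∑ S ∈ (Finset.range l.length).powerset,
          (if maskProd n l S = x
            then (X : Polynomial ℤ) ^ (len n (maskProd n l S) + (defectSet n l S).card)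
            else 0) := by
    intro x
    by_cases hB : Bruhat n x w
    · rw [if_pos hB, defPoly, Finset.mul_sum]
      apply Finset.sum_congr rfl
      intro S _
      by_cases hxS : maskProd n l S = x
      · rw [if_pos hxS, if_pos hxS, hxS, pow_add]
      · rw [if_neg hxS, if_neg hxS, mul_zero]
    · rw [if_neg hB]
      symm
      apply Finset.sum_eq_zero
      intro S _
      rw [if_neg (fun h => hB (by rw [← h]; exact hBr S))]
  calc (∑ x : Equiv.Perm (Fin n),
        (if Bruhat n x w then (X : Polynomial ℤ) ^ (len n x) * defPoly n l x else 0))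
      = ∑ x : Equiv.Perm (Fin n), ∑ S ∈ (Finset.range l.length).powerset,
          (if maskProd n l S = x
            then (X : Polynomial ℤ) ^ (len n (maskProd n l S) + (defectSet n l S).card)
            else 0) := Finset.sum_congr rfl (fun x _ => hx x)
    _ = ∑ S ∈ (Finset.range l.length).powerset, ∑ x : Equiv.Perm (Fin n),
          (if maskProd n l S = x
            then (X : Polynomial ℤ) ^ (len n (maskProd n l S) + (defectSet n l S).card)
            else 0) := Finset.sum_comm
    _ = ∑ S ∈ (Finset.range l.length).powerset,
          (X : Polynomial ℤ) ^ (len n (maskProd n l S) + (defectSet n l S).card) := by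
        apply Finset.sum_congr rfl
        intro S _
        rw [Finset.sum_ite_eq Finset.univ (maskProd n l S)
          (fun _ => (X : Polynomial ℤ) ^ (len n (maskProd n l S) + (defectSet n l S).card)),
          if_pos (Finset.mem_univ _)]
    _ = (1 + X) ^ l.length := part2
    _ = (1 + X) ^ (len n w) := by rw [hlen]
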